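/- Any M-dimensional dendPLRNN update z_t = A z_{t−1} + W·Σ_{b=1}^{B} α_b·max(0, z_{t−1} − h_b) + h_0 can be rewritten as a conventional (M·B)-dimensional PLRNN: defining z̃_t ∈ R^{MB} as B stacked copies of z_t, h̃ ∈ R^{MB} as the stacked thresholds (h_1,…,h_B), Ã = blockdiag(A,…,A), W̃ the MB×MB block matrix whose (r,b)-block equals α_b·W for all r, and ẑ_t := z̃_t − h̃, the sequence ẑ_t satisfies ẑ_t = Ã ẑ_{t−1} + W̃·max(0, ẑ_{t−1}) + ĥ_0 with ĥ_0 = (Ã − I)h̃ + h̃_0, where h̃_0 is the stacked copy of h_0. -/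
import Mathlib


open Matrix

/-- Any `M`-dimensional dendPLRNN can be rewritten as a conventional
`M·B`-dimensional PLRNN: the shifted stacked states `ẑ_t = z̃_t - h̃` satisfy
`ẑ_t = Ã ẑ_{t-1} + W̃ max(0, ẑ_{t-1}) + ĥ₀` with `ĥ₀ = (Ã - I) h̃ + h̃₀`. -/
theorem dendPLRNN_as_conventional_PLRNN
    (M B : ℕ) (A W : Matrix (Fin M) (Fin M) ℝ) (h0 : Fin M → ℝ)
    (α : Fin B → ℝ) (h : Fin B → Fin M → ℝ)
    (z : ℕ → Fin M → ℝ)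
    (hz : ∀ t, z (t + 1) =
      A *ᵥ z t + W *ᵥ (fun j => ∑ b, α b * max 0 (z t j - h b j)) + h0)
    (Atil : Matrix (Fin B × Fin M) (Fin B × Fin M) ℝ)
    (hAtil : ∀ p q, Atil p q = if p.1 = q.1 then A p.2 q.2 else 0)
    (Wtil : Matrix (Fin B × Fin M) (Fin B × Fin M) ℝ)
    (hWtil : ∀ p q, Wtil p q = α q.1 * W p.2 q.2)
    (htil : Fin B × Fin M → ℝ) (hhtil : ∀ p, htil p = h p.1 p.2)
    (h0til : Fin B × Fin M → ℝ) (hh0til : ∀ p, h0til p = h0 p.2)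
    (zhat : ℕ → Fin B × Fin M → ℝ)
    (hzhat : ∀ t p, zhat t p = z t p.2 - htil p) :
    ∀ t, zhat (t + 1) =
      Atil *ᵥ zhat t + Wtil *ᵥ (fun p => max 0 (zhat t p)) +
        ((Atil - 1) *ᵥ htil + h0til) := by
  intro t
  funext p
  obtain ⟨b, i⟩ := p
  have hAz : (Atil *ᵥ zhat t) (b, i) = ∑ j, A i j * (z t j - h b j) := by
    simp only [mulVec, dotProduct, Fintype.sum_prod_type, hAtil, hzhat, hhtil,
      ite_mul, zero_mul]
    rw [Finset.sum_eq_single b] <;> simp +contextual [eq_comm]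
  have hWz : (Wtil *ᵥ (fun p => max 0 (zhat t p))) (b, i)
      = ∑ j, W i j * ∑ r, α r * max 0 (z t j - h r j) := by
    simp only [mulVec, dotProduct, Fintype.sum_prod_type, hWtil, hzhat, hhtil]
    rw [Finset.sum_comm]
    congr 1; funext j
    rw [Finset.mul_sum]
    congr 1; funext r; ring
  have hAh : ((Atil - 1) *ᵥ htil) (b, i) = (∑ j, A i j * h b j) - h b i := by
    simp only [sub_mulVec, Pi.sub_apply, one_mulVec, hhtil]
    congr 1
    simp only [mulVec, dotProduct, Fintype.sum_prod_type, hAtil, hhtil,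
      ite_mul, zero_mul]
    rw [Finset.sum_eq_single b] <;> simp +contextual [eq_comm]
  show zhat (t+1) (b,i) = _
  simp only [Pi.add_apply, hAz, hWz, hAh, hh0til]
  rw [hzhat, hhtil, hz t]
  simp only [Pi.add_apply, mulVec, dotProduct]
  simp only [Finset.sum_sub_distrib, mul_sub]
  ring
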